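/- Let R be a connected rainbow graph on vertex set [k] with edge set E, k ≥ 3, viewed as a T-edge-colored complete graph with T = E ∪ {∅}, and let H be an n-vertex T-edge-colored complete graph with coloring χ_H. Then for every edge ij ∈ E and every x ∈ V(H), d_i(x) ≤ d_{{i,j}}(x) · ((n − d_{{i,j}}(x))/(k−2))^{k−2}, where d_{{i,j}}(x) is the number of vertices y ≠ x with χ_H(xy) = {i,j}. -/

import Mathlib

open Finset Filter

open scoped Classical

section Defs

variable {T : Type}

/-- A coloring of the complete graph is symmetric. -/
def IsSym {V : Type} (χ : V → V → T) : Prop := ∀ u v, χ u v = χ v u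

/-- `copyCount k n R χ` : the number of `k`-element subsets of `Fin n` whose coloring
induced by `χ` is isomorphic (as an edge-colored complete graph) to `R`. -/
noncomputable def copyCount (k n : ℕ) (R : Fin k → Fin k → T) (χ : Fin n → Fin n → T) : ℕ :=
  ((Finset.powersetCard k (Finset.univ : Finset (Fin n))).filter
    (fun S => ∃ φ : Fin k → Fin n, Function.Injective φ ∧ (∀ a, φ a ∈ S) ∧
      ∀ a b : Fin k, a ≠ b → χ (φ a) (φ b) = R a b)).card

/-- `maxCopyCount k n R = I(R,n)` : the maximum of `copyCount` over all symmetric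
`T`-colorings of the complete graph on `n` vertices. -/
noncomputable def maxCopyCount [Fintype T] (k n : ℕ) (R : Fin k → Fin k → T) : ℕ :=
  Finset.sup ((Finset.univ : Finset (Fin n → Fin n → T)).filter (fun χ => IsSym χ))
    (fun χ => copyCount k n R χ)

/-- `vertDeg k n R χ x = d(x)` : the number of `k`-subsets containing `x` whose induced
coloring is isomorphic to `R`. -/
noncomputable def vertDeg (k n : ℕ) (R : Fin k → Fin k → T) (χ : Fin n → Fin n → T)
    (x : Fin n) : ℕ :=
  ((Finset.powersetCard k (Finset.univ : Finset (Fin n))).filter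
    (fun S => x ∈ S ∧ ∃ φ : Fin k → Fin n, Function.Injective φ ∧ (∀ a, φ a ∈ S) ∧
      ∀ a b : Fin k, a ≠ b → χ (φ a) (φ b) = R a b)).card

/-- `embCount k n R χ i x = d_i(x)` : the number of injective color-preserving maps
`φ : Fin k → Fin n` with `φ i = x`. -/
noncomputable def embCount (k n : ℕ) (R : Fin k → Fin k → T) (χ : Fin n → Fin n → T)
    (i : Fin k) (x : Fin n) : ℕ :=
  ((Finset.univ : Finset (Fin k → Fin n)).filter
    (fun φ => Function.Injective φ ∧ φ i = x ∧
      ∀ a b : Fin k, a ≠ b → χ (φ a) (φ b) = R a b)).card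

/-- `Nset k n R χ i x = N_i(x)` : the set of vertices `y ≠ x` lying in the image of some
injective color-preserving map `φ : Fin k → Fin n` with `φ i = x`. -/
noncomputable def Nset (k n : ℕ) (R : Fin k → Fin k → T) (χ : Fin n → Fin n → T)
    (i : Fin k) (x : Fin n) : Finset (Fin n) :=
  (Finset.univ : Finset (Fin n)).filter
    (fun y => y ≠ x ∧ ∃ φ : Fin k → Fin n, Function.Injective φ ∧ φ i = x ∧
      (∀ a b : Fin k, a ≠ b → χ (φ a) (φ b) = R a b) ∧ ∃ a, φ a = y)

/-- `colorDeg χ x c = d_c(x)` : the number of vertices `y ≠ x` with `χ x y = c`. -/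
noncomputable def colorDeg {n : ℕ} (χ : Fin n → Fin n → T) (x : Fin n) (c : T) : ℕ :=
  ((Finset.univ : Finset (Fin n)).filter (fun y => y ≠ x ∧ χ x y = c)).card

end Defs

/-- The rainbow `k`-clique: the edge `ij` gets color `{i,j}`. -/
def rainbowClique (k : ℕ) : Fin k → Fin k → Finset (Fin k) := fun i j => {i, j}

/-- A rainbow graph `G` on `[k]`, viewed as an edge-colored complete graph: edges `ij ∈ E`
get color `{i,j}`, non-edges get color `∅`. -/
noncomputable def rainbowOf {k : ℕ} (G : SimpleGraph (Fin k)) :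
    Fin k → Fin k → Finset (Fin k) :=
  fun i j => if G.Adj i j then {i, j} else ∅

/-- `B(x)` : the set of neighbors of `x`, i.e. vertices joined to `x` by a non-`∅` color. -/
noncomputable def Bset {k n : ℕ} (χ : Fin n → Fin n → Finset (Fin k)) (x : Fin n) :
    Finset (Fin n) :=
  (Finset.univ : Finset (Fin n)).filter (fun y => y ≠ x ∧ χ x y ≠ ∅)

/-- The degree of vertex `i` in the graph `G`. -/
noncomputable def degR {k : ℕ} (G : SimpleGraph (Fin k)) (i : Fin k) : ℕ :=
  ((Finset.univ : Finset (Fin k)).filter (fun j => G.Adj i j)).card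

section Aux

variable {k n : ℕ} (G : SimpleGraph (Fin k)) (χ : Fin n → Fin n → Finset (Fin k))

noncomputable def emb (A : Finset (Fin k)) (h : Fin k → Fin n) : Finset (Fin k → Fin n) :=
  (Finset.univ).filter (fun φ => Function.Injective φ ∧ (∀ a, a ∉ A → φ a = h a) ∧
    ∀ a b : Fin k, a ≠ b → χ (φ a) (φ b) = rainbowOf G a b)

noncomputable def cand (A : Finset (Fin k)) (h : Fin k → Fin n) (r : Fin k) : Finset (Fin n) :=
  (Finset.univ).filter (fun w => ∀ s, s ∉ A → χ (h s) w = rainbowOf G s r)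

noncomputable def mset (A : Finset (Fin k)) (h : Fin k → Fin n) : Finset (Fin n) :=
  A.biUnion (fun r => cand G χ A h r)

lemma mem_emb {A h φ} : φ ∈ emb G χ A h ↔ Function.Injective φ ∧ (∀ a, a ∉ A → φ a = h a) ∧
    ∀ a b : Fin k, a ≠ b → χ (φ a) (φ b) = rainbowOf G a b := by
  simp [emb]

lemma mem_cand {A h r w} : w ∈ cand G χ A h r ↔ ∀ s, s ∉ A → χ (h s) w = rainbowOf G s r := by
  simp [cand]

lemma emb_eq_biUnion {A : Finset (Fin k)} {h : Fin k → Fin n} {r : Fin k} (hr : r ∈ A) :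
    emb G χ A h = (cand G χ A h r).biUnion
      (fun w => emb G χ (A.erase r) (Function.update h r w)) := by
  ext φ
  simp only [mem_biUnion]
  constructor
  · intro hφ
    obtain ⟨hinj, hext, hcol⟩ := (mem_emb G χ).1 hφ
    refine ⟨φ r, ?_, ?_⟩
    · rw [mem_cand]
      intro s hs
      have hsr : s ≠ r := fun e => hs (e ▸ hr)
      rw [← hext s hs]
      exact hcol s r hsr
    · rw [mem_emb]
      refine ⟨hinj, ?_, hcol⟩
      intro a ha
      by_cases hae : a = r
      · subst hae; simp
      · have haA : a ∉ A := fun hA => ha (Finset.mem_erase.2 ⟨hae, hA⟩)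
        rw [Function.update_of_ne hae]
        exact hext a haA
  · rintro ⟨w, hw, hφ⟩
    obtain ⟨hinj, hext, hcol⟩ := (mem_emb G χ).1 hφ
    rw [mem_emb]
    refine ⟨hinj, ?_, hcol⟩
    intro a ha
    have hne : a ∉ A.erase r := fun h' => ha (Finset.mem_of_mem_erase h')
    have har : a ≠ r := fun e => ha (by rw [e]; exact hr)
    have := hext a hne
    rwa [Function.update_of_ne har w h] at this

lemma emb_card_step {A : Finset (Fin k)} {h : Fin k → Fin n} {r : Fin k} (hr : r ∈ A) :
    (emb G χ A h).card =
      ∑ w ∈ cand G χ A h r, (emb G χ (A.erase r) (Function.update h r w)).card := by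
  rw [emb_eq_biUnion G χ hr]
  refine Finset.card_biUnion ?_
  intro w hw w' hw' hne
  unfold Function.onFun
  rw [Finset.disjoint_left]
  intro φ h1 h2
  have e1 := ((mem_emb G χ).1 h1).2.1 r (Finset.notMem_erase r A)
  have e2 := ((mem_emb G χ).1 h2).2.1 r (Finset.notMem_erase r A)
  rw [Function.update_self] at e1 e2
  exact hne (e1 ▸ e2 ▸ rfl)

lemma mset_step {A : Finset (Fin k)} {h : Fin k → Fin n} {r s₀ : Fin k} {w : Fin n}
    (hr : r ∈ A) (hs : s₀ ∉ A) (hadj : G.Adj s₀ r) :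
    mset G χ (A.erase r) (Function.update h r w) ⊆ mset G χ A h \ cand G χ A h r := by
  intro u hu
  obtain ⟨r', hr', hu'⟩ := Finset.mem_biUnion.1 hu
  have hr'A : r' ∈ A := Finset.mem_of_mem_erase hr'
  have hr'r : r' ≠ r := (Finset.mem_erase.1 hr').1
  have hcand' := (mem_cand G χ).1 hu'
  rw [Finset.mem_sdiff]
  constructor
  · refine Finset.mem_biUnion.2 ⟨r', hr'A, ?_⟩
    rw [mem_cand]
    intro s hsA
    have hse : s ∉ A.erase r := fun h' => hsA (Finset.mem_of_mem_erase h')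
    have hsr : s ≠ r := fun e => hsA (by rw [e]; exact hr)
    have := hcand' s hse
    rwa [Function.update_of_ne hsr] at this
  · intro hu2
    have h1 := (mem_cand G χ).1 hu2 s₀ hs
    have hs0e : s₀ ∉ A.erase r := fun h' => hs (Finset.mem_of_mem_erase h')
    have hs0r : s₀ ≠ r := fun e => hs (by rw [e]; exact hr)
    have h2 := hcand' s₀ hs0e
    rw [Function.update_of_ne hs0r] at h2
    rw [h1] at h2
    -- h2 : rainbowOf G s₀ r = rainbowOf G s₀ r'
    unfold rainbowOf at h2
    rw [if_pos hadj] at h2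
    by_cases hadj' : G.Adj s₀ r'
    · rw [if_pos hadj'] at h2
      have : r ∈ ({s₀, r'} : Finset (Fin k)) := by
        rw [← h2]; simp
      rcases Finset.mem_insert.1 this with e | e
      · exact hs (e ▸ hr)
      · exact hr'r ((Finset.mem_singleton.1 e).symm)
    · rw [if_neg hadj'] at h2
      have : r ∈ (∅ : Finset (Fin k)) := by rw [← h2]; simp
      simp at this

lemma walk_crossing {V : Type} {G : SimpleGraph V} {A : Finset V} :
    ∀ {b a : V}, G.Walk b a → b ∉ A → a ∈ A → ∃ r ∈ A, ∃ s ∉ A, G.Adj s r := by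
  intro b a w
  induction w with
  | nil => intro hb ha; exact absurd ha hb
  | @cons u v c h p ih =>
    intro hb ha
    by_cases hv : v ∈ A
    · exact ⟨v, hv, u, hb, h⟩
    · exact ih hv ha

lemma crossing {G : SimpleGraph (Fin k)} (hG : G.Connected) {A : Finset (Fin k)}
    (hA : A.Nonempty) (hA' : ∃ s, s ∉ A) : ∃ r ∈ A, ∃ s ∉ A, G.Adj s r := by
  obtain ⟨a, ha⟩ := hA
  obtain ⟨b, hb⟩ := hA'
  exact walk_crossing (hG.preconnected b a).some hb ha

lemma amgm (q : ℕ) (hq : 1 ≤ q) (c m : ℝ) (hc : 0 ≤ c) (hcm : c ≤ m) :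
    c * ((m - c) / ((q - 1 : ℕ) : ℝ)) ^ (q - 1) ≤ (m / (q : ℝ)) ^ q := by
  rcases Nat.lt_or_ge q 2 with h2 | h2
  · interval_cases q
    · simpa using hcm
  · set p : ℕ := q - 1 with hp
    have hp1 : 1 ≤ p := by omega
    have hpq : (p : ℝ) + 1 = (q : ℝ) := by
      push_cast [hp, Nat.cast_sub (by omega : 1 ≤ q)]; ring
    have hq0 : (0:ℝ) < (q : ℝ) := by positivity
    have hP0 : (0:ℝ) < (p : ℝ) := by exact_mod_cast hp1
    set y : ℝ := (m - c) / (p : ℝ) with hy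
    have hy0 : 0 ≤ y := div_nonneg (by linarith) hP0.le
    have hw : (1:ℝ)/q + (p:ℝ)/q = 1 := by field_simp; linarith [hpq]
    have h1 : c ^ ((1:ℝ)/q) * y ^ ((p:ℝ)/q) ≤ (1/(q:ℝ)) * c + ((p:ℝ)/q) * y :=
      Real.geom_mean_le_arith_mean2_weighted (by positivity) (by positivity) hc hy0 hw
    have hrhs : (1/(q:ℝ)) * c + ((p:ℝ)/q) * y = m / q := by
      rw [hy]; field_simp; ring
    rw [hrhs] at h1
    have hLnn : 0 ≤ c ^ ((1:ℝ)/q) * y ^ ((p:ℝ)/q) := by positivity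
    have h2' := pow_le_pow_left₀ hLnn h1 q
    calc c * y ^ p = (c ^ ((1:ℝ)/q) * y ^ ((p:ℝ)/q)) ^ q := by
          rw [mul_pow, ← Real.rpow_natCast (c ^ ((1:ℝ)/q)) q, ← Real.rpow_natCast (y ^ ((p:ℝ)/q)) q,
            ← Real.rpow_mul hc, ← Real.rpow_mul hy0]
          rw [one_div_mul_cancel (ne_of_gt hq0), Real.rpow_one]
          rw [div_mul_cancel₀ _ (ne_of_gt hq0), Real.rpow_natCast]
      _ ≤ (m / q) ^ q := h2'

theorem key (hG : G.Connected) : ∀ (N : ℕ) (A : Finset (Fin k)) (h : Fin k → Fin n),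
    A.card = N → (∃ s, s ∉ A) →
    ((emb G χ A h).card : ℝ) ≤ (((mset G χ A h).card : ℝ) / (A.card : ℝ)) ^ A.card := by
  intro N
  induction N using Nat.strong_induction_on with
  | _ N ih =>
    intro A h hN hex
    rcases Finset.eq_empty_or_nonempty A with rfl | hA
    · have hle : (emb G χ ∅ h).card ≤ 1 := by
        refine Finset.card_le_one.2 ?_
        intro φ hφ ψ hψ
        have h1 := ((mem_emb G χ).1 hφ).2.1
        have h2 := ((mem_emb G χ).1 hψ).2.1
        funext a
        rw [h1 a (Finset.notMem_empty a), h2 a (Finset.notMem_empty a)]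
      simp only [Finset.card_empty, pow_zero]
      exact_mod_cast hle
    · obtain ⟨r, hr, s₀, hs₀, hadj⟩ := crossing hG hA hex
      have hq1 : 1 ≤ A.card := Finset.card_pos.2 hA
      set q := A.card with hq
      have hcards : (A.erase r).card = q - 1 := by rw [Finset.card_erase_of_mem hr]
      have hcsub : cand G χ A h r ⊆ mset G χ A h := fun w hw => Finset.mem_biUnion.2 ⟨r, hr, hw⟩
      set m := (mset G χ A h).card with hm
      set c := (cand G χ A h r).card with hc
      have hcm : c ≤ m := Finset.card_le_card hcsub
      have key2 : ∀ w ∈ cand G χ A h r,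
          ((emb G χ (A.erase r) (Function.update h r w)).card : ℝ)
            ≤ (((m - c : ℕ) : ℝ) / ((q - 1 : ℕ) : ℝ)) ^ (q - 1) := by
        intro w hw
        have h1 := ih (q-1) (by omega) (A.erase r) (Function.update h r w) hcards
          ⟨s₀, fun hcc => hs₀ (Finset.mem_of_mem_erase hcc)⟩
        rw [hcards] at h1
        refine h1.trans ?_
        have hsub := mset_step G χ (h := h) (w := w) hr hs₀ hadj
        have hm' : (mset G χ (A.erase r) (Function.update h r w)).card ≤ m - c := by
          calc (mset G χ (A.erase r) (Function.update h r w)).card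
              ≤ (mset G χ A h \ cand G χ A h r).card := Finset.card_le_card hsub
            _ = m - c := Finset.card_sdiff_of_subset hcsub
        rw [div_eq_mul_inv, div_eq_mul_inv]
        refine pow_le_pow_left₀ (by positivity) (mul_le_mul_of_nonneg_right ?_ (by positivity)) _
        exact_mod_cast hm'
      have hsum : ((emb G χ A h).card : ℝ)
          = ∑ w ∈ cand G χ A h r, ((emb G χ (A.erase r) (Function.update h r w)).card : ℝ) := by
        rw [emb_card_step G χ hr]
        push_cast
        ring
      rw [hsum]
      calc ∑ w ∈ cand G χ A h r, ((emb G χ (A.erase r) (Function.update h r w)).card : ℝ)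
          ≤ ∑ _w ∈ cand G χ A h r, (((m - c : ℕ) : ℝ) / ((q - 1 : ℕ) : ℝ)) ^ (q - 1) :=
            Finset.sum_le_sum key2
        _ = (c : ℝ) * (((m - c : ℕ) : ℝ) / ((q - 1 : ℕ) : ℝ)) ^ (q - 1) := by
            rw [Finset.sum_const, nsmul_eq_mul]
        _ ≤ ((m : ℝ) / (q : ℝ)) ^ q := by
            have hA := amgm q hq1 (c : ℝ) (m : ℝ) (by positivity) (by exact_mod_cast hcm)
            rwa [← Nat.cast_sub hcm] at hA

theorem partition_bound_c' (k n : ℕ) (hk : 3 ≤ k) (G : SimpleGraph (Fin k)) (hG : G.Connected)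
    (χ : Fin n → Fin n → Finset (Fin k)) (hχ : IsSym χ)
    (i j : Fin k) (hij : G.Adj i j) (x : Fin n) :
    ((Finset.univ.filter (fun φ : Fin k → Fin n => Function.Injective φ ∧ φ i = x ∧
      ∀ a b : Fin k, a ≠ b → χ (φ a) (φ b) = rainbowOf G a b)).card : ℝ) ≤
      ((Finset.univ.filter (fun y : Fin n => y ≠ x ∧ χ x y = ({i, j} : Finset (Fin k)))).card : ℝ) *
        (((n : ℝ) - ((Finset.univ.filter (fun y : Fin n => y ≠ x ∧ χ x y = ({i, j} : Finset (Fin k)))).card : ℝ)) / ((k : ℝ) - 2)) ^ (k - 2) := by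
  have hijne : i ≠ j := hij.ne
  set h₀ : Fin k → Fin n := fun _ => x with hh₀
  set A₀ : Finset (Fin k) := Finset.univ.erase i with hA₀
  set A₁ : Finset (Fin k) := A₀.erase j with hA₁
  set D : Finset (Fin n) := Finset.univ.filter (fun y : Fin n => y ≠ x ∧ χ x y = ({i, j} : Finset (Fin k))) with hD
  have hiA₀ : i ∉ A₀ := Finset.notMem_erase i _
  have hjA₀ : j ∈ A₀ := Finset.mem_erase.2 ⟨hijne.symm, Finset.mem_univ j⟩
  have hiA₁ : i ∉ A₁ := fun hc => hiA₀ (Finset.mem_of_mem_erase hc)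
  -- Step 1: embCount as emb
  have step1 : Finset.univ.filter (fun φ : Fin k → Fin n => Function.Injective φ ∧ φ i = x ∧
      ∀ a b : Fin k, a ≠ b → χ (φ a) (φ b) = rainbowOf G a b) = emb G χ A₀ h₀ := by
    ext φ
    rw [mem_emb, Finset.mem_filter]
    constructor
    · rintro ⟨-, hinj, hix, hcol⟩
      refine ⟨hinj, ?_, hcol⟩
      intro a ha
      have : a = i := by
        by_contra hne
        exact ha (Finset.mem_erase.2 ⟨hne, Finset.mem_univ a⟩)
      rw [this, hix]
    · rintro ⟨hinj, hext, hcol⟩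
      exact ⟨Finset.mem_univ φ, hinj, hext i hiA₀, hcol⟩
  -- cand at j
  have hcandmem : ∀ w : Fin n, w ∈ cand G χ A₀ h₀ j ↔ χ x w = ({i, j} : Finset (Fin k)) := by
    intro w
    rw [mem_cand]
    constructor
    · intro hc
      have := hc i hiA₀
      rw [hh₀] at this
      simpa [rainbowOf, hij] using this
    · intro hc s hs
      have hsi : s = i := by
        by_contra hne
        exact hs (Finset.mem_erase.2 ⟨hne, Finset.mem_univ s⟩)
      subst hsi
      simpa [rainbowOf, hij, hh₀] using hc
  have hDerase : D = (cand G χ A₀ h₀ j).erase x := by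
    ext w
    rw [Finset.mem_erase, hcandmem, hD, Finset.mem_filter]
    constructor
    · rintro ⟨-, hne, hc⟩; exact ⟨hne, hc⟩
    · rintro ⟨hne, hc⟩; exact ⟨Finset.mem_univ w, hne, hc⟩
  -- the term at w = x vanishes
  have hzero : (emb G χ A₁ (Function.update h₀ j x)).card = 0 := by
    rw [Finset.card_eq_zero, Finset.eq_empty_iff_forall_notMem]
    intro φ hφ
    obtain ⟨hinj, hext, -⟩ := (mem_emb G χ).1 hφ
    have e1 : φ i = x := by
      have := hext i hiA₁
      rwa [Function.update_of_ne hijne, hh₀] at this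
    have e2 : φ j = x := by
      have := hext j (Finset.notMem_erase j A₀)
      rwa [Function.update_self] at this
    exact hijne (hinj (e1.trans e2.symm))
  -- sum decomposition
  have hcard : ((emb G χ A₀ h₀).card : ℝ)
      = ∑ w ∈ D, ((emb G χ A₁ (Function.update h₀ j w)).card : ℝ) := by
    rw [emb_card_step G χ hjA₀]
    rw [hDerase]
    rw [Finset.sum_erase _ (by exact_mod_cast hzero)]
    push_cast
    ring
  -- cardinality of A₁
  have hA₁card : A₁.card = k - 2 := by
    have h1 : A₀.card = k - 1 := by
      rw [hA₀, Finset.card_erase_of_mem (Finset.mem_univ i), Finset.card_univ, Fintype.card_fin]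
    rw [hA₁, Finset.card_erase_of_mem hjA₀, h1]
    omega
  have hk2 : ((k - 2 : ℕ) : ℝ) = (k : ℝ) - 2 := by
    have : (2:ℕ) ≤ k := by omega
    push_cast [Nat.cast_sub this]
    ring
  have hdn : D.card ≤ n := by
    calc D.card ≤ (Finset.univ : Finset (Fin n)).card := Finset.card_le_card (Finset.filter_subset _ _)
      _ = n := by rw [Finset.card_univ, Fintype.card_fin]
  -- bound each term
  have hterm : ∀ w ∈ D, ((emb G χ A₁ (Function.update h₀ j w)).card : ℝ)
      ≤ (((n : ℝ) - (D.card : ℝ)) / ((k : ℝ) - 2)) ^ (k - 2) := by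
    intro w hw
    have hkey := key G χ hG A₁.card A₁ (Function.update h₀ j w) rfl ⟨i, hiA₁⟩
    rw [hA₁card] at hkey
    refine hkey.trans ?_
    -- m₁ ≤ n - d
    have hdisj : Disjoint (mset G χ A₁ (Function.update h₀ j w)) D := by
      rw [Finset.disjoint_left]
      intro u hu huD
      obtain ⟨r, hrA, hur⟩ := Finset.mem_biUnion.1 hu
      have hri : r ≠ i := (Finset.mem_erase.1 (Finset.mem_of_mem_erase hrA)).1
      have hrj : r ≠ j := (Finset.mem_erase.1 hrA).1
      have h1 := (mem_cand G χ).1 hur i hiA₁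
      rw [Function.update_of_ne hijne, hh₀] at h1
      have h2 := (Finset.mem_filter.1 huD).2.2
      rw [h2] at h1
      -- h1 : {i, j} = rainbowOf G i r
      unfold rainbowOf at h1
      by_cases hadj' : G.Adj i r
      · rw [if_pos hadj'] at h1
        have : j ∈ ({i, r} : Finset (Fin k)) := by rw [← h1]; simp
        rcases Finset.mem_insert.1 this with e | e
        · exact hijne e.symm
        · exact hrj (Finset.mem_singleton.1 e).symm
      · rw [if_neg hadj'] at h1
        have : j ∈ (∅ : Finset (Fin k)) := by rw [← h1]; simp
        simp at this
    have hm1 : (mset G χ A₁ (Function.update h₀ j w)).card + D.card ≤ n := by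
      rw [← Finset.card_union_of_disjoint hdisj]
      calc (mset G χ A₁ (Function.update h₀ j w) ∪ D).card
          ≤ (Finset.univ : Finset (Fin n)).card := Finset.card_le_card (Finset.subset_univ _)
        _ = n := by rw [Finset.card_univ, Fintype.card_fin]
    have hm1R : ((mset G χ A₁ (Function.update h₀ j w)).card : ℝ) ≤ (n : ℝ) - (D.card : ℝ) := by
      have : ((mset G χ A₁ (Function.update h₀ j w)).card : ℝ) + (D.card : ℝ) ≤ (n : ℝ) := by
        exact_mod_cast hm1
      linarith
    rw [hk2]
    rw [div_eq_mul_inv, div_eq_mul_inv]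
    refine pow_le_pow_left₀ ?_ (mul_le_mul_of_nonneg_right hm1R ?_) _
    · rw [← hk2]; positivity
    · have h3 : (3:ℝ) ≤ (k:ℝ) := by exact_mod_cast hk
      have : (0:ℝ) ≤ (k:ℝ) - 2 := by linarith
      exact inv_nonneg.2 this
  rw [step1, hcard]
  calc ∑ w ∈ D, ((emb G χ A₁ (Function.update h₀ j w)).card : ℝ)
      ≤ ∑ _w ∈ D, (((n : ℝ) - (D.card : ℝ)) / ((k : ℝ) - 2)) ^ (k - 2) := Finset.sum_le_sum hterm
    _ = (D.card : ℝ) * (((n : ℝ) - (D.card : ℝ)) / ((k : ℝ) - 2)) ^ (k - 2) := by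
        rw [Finset.sum_const, nsmul_eq_mul]

end Aux

/-- Lemma partition (c): for a connected rainbow graph `R` on `[k]` and an edge
`ij ∈ E`, `d_i(x) ≤ d_{{i,j}}(x) · ((n − d_{{i,j}}(x))/(k−2))^{k−2}`. -/
theorem partition_bound_c (k n : ℕ) (hk : 3 ≤ k) (G : SimpleGraph (Fin k)) (hG : G.Connected)
    (χ : Fin n → Fin n → Finset (Fin k)) (hχ : IsSym χ)
    (i j : Fin k) (hij : G.Adj i j) (x : Fin n) :
    (embCount k n (rainbowOf G) χ i x : ℝ) ≤
      (colorDeg χ x ({i, j} : Finset (Fin k)) : ℝ) *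
        (((n : ℝ) - (colorDeg χ x ({i, j} : Finset (Fin k)) : ℝ)) / ((k : ℝ) - 2)) ^ (k - 2) := by
  have h := partition_bound_c' k n hk G hG χ hχ i j hij x
  unfold embCount colorDeg
  convert h using 4 <;> congr!
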